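/- Let λ > 0 and let (c, Q) be a spectral pair at λ. Then the Q²-weighted mean trait strictly exceeds the Q-weighted mean trait; that is, (∫_Θ θ Q(θ)² dθ) / (∫_Θ Q(θ)² dθ) > ∫_Θ θ Q(θ) dθ. -/

import Mathlib

open Set Filter MeasureTheory

/-- A spectral pair `(c, Q)` at `lam` for parameters `thmin thmax alpha r`:
`Q` is positive, normalized, twice continuously differentiable, solves the eigenproblem
on `(thmin, thmax)` and satisfies Neumann boundary conditions. -/
def IsSpectralPair (thmin thmax alpha r lam c : ℝ) (Q : ℝ → ℝ) : Prop :=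
  ContDiff ℝ 2 Q ∧
  (∀ θ ∈ Set.Icc thmin thmax, 0 < Q θ) ∧
  (∫ θ in Set.Ioo thmin thmax, Q θ) = 1 ∧
  (∀ θ ∈ Set.Ioo thmin thmax,
    alpha * iteratedDeriv 2 Q θ + (-(lam * c) + θ * lam ^ 2 + r) * Q θ = 0) ∧
  deriv Q thmin = 0 ∧ deriv Q thmax = 0

theorem statement6 (thmin thmax alpha r : ℝ)
    (hth : 0 < thmin) (hthth : thmin < thmax) (halpha : 0 < alpha) (hr : 0 < r)
    (lam c : ℝ) (hlam : 0 < lam) (Q : ℝ → ℝ)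
    (hQ : IsSpectralPair thmin thmax alpha r lam c Q) :
    (∫ θ in Set.Ioo thmin thmax, θ * Q θ ^ 2) / (∫ θ in Set.Ioo thmin thmax, Q θ ^ 2)
      > ∫ θ in Set.Ioo thmin thmax, θ * Q θ := by
  obtain ⟨hC2, hpos, hnorm, hode, hda, hdb⟩ := hQ
  have hab' : thmin ≤ thmax := le_of_lt hthth
  -- smoothness facts
  have h2 : ContDiff ℝ ((1:ℕ)+1) Q := by exact_mod_cast hC2
  rw [contDiff_succ_iff_deriv] at h2
  have hdQ : Differentiable ℝ Q := h2.1
  have h1 := h2.2.2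
  have hdQ' : Differentiable ℝ (deriv Q) := h1.differentiable (by simp)
  have hcQ : Continuous Q := hdQ.continuous
  have hcQ' : Continuous (deriv Q) := hdQ'.continuous
  have hcQ'' : Continuous (deriv (deriv Q)) := h1.continuous_deriv le_rfl
  -- ODE in convenient form
  have hode' : ∀ θ ∈ Set.Ioo thmin thmax,
      alpha * deriv (deriv Q) θ = (lam * c - θ * lam ^ 2 - r) * Q θ := by
    intro θ hθ
    have h := hode θ hθ
    rw [show iteratedDeriv 2 Q θ = deriv (deriv Q) θ by
      simp [iteratedDeriv_succ, iteratedDeriv_zero]] at h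
    linear_combination h
  -- set-integral over Ioo equals interval integral
  have hset : ∀ f : ℝ → ℝ, (∫ θ in Set.Ioo thmin thmax, f θ) = ∫ θ in thmin..thmax, f θ := by
    intro f
    rw [intervalIntegral.integral_of_le hab', integral_Ioc_eq_integral_Ioo]
  have hint : ∀ f : ℝ → ℝ, Continuous f → IntegrableOn f (Set.Ioo thmin thmax) := by
    intro f hf
    exact (intervalIntegrable_iff_integrableOn_Ioo_of_le hab').mp (hf.intervalIntegrable _ _)
  -- FTC: integral of Q'' vanishes by Neumann BC
  have hI2 : (∫ θ in thmin..thmax, deriv (deriv Q) θ) = 0 := by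
    rw [intervalIntegral.integral_deriv_eq_sub (fun x _ => hdQ' x)
      (hcQ''.intervalIntegrable _ _), hda, hdb, sub_zero]
  -- FTC for Q * Q'
  have hg : ∀ x : ℝ, HasDerivAt (fun θ => Q θ * deriv Q θ)
      (deriv Q x * deriv Q x + Q x * deriv (deriv Q) x) x := by
    intro x
    exact (hdQ x).hasDerivAt.mul (hdQ' x).hasDerivAt
  have hI3 : (∫ θ in thmin..thmax, (deriv Q θ * deriv Q θ + Q θ * deriv (deriv Q) θ)) = 0 := by
    rw [intervalIntegral.integral_eq_sub_of_hasDerivAt (fun x _ => hg x)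
      (((hcQ'.mul hcQ').add (hcQ.mul hcQ'')).intervalIntegrable _ _), hda, hdb]
    ring
  have hsplit : (∫ θ in thmin..thmax, deriv Q θ * deriv Q θ)
      + (∫ θ in thmin..thmax, Q θ * deriv (deriv Q) θ) = 0 := by
    rw [← intervalIntegral.integral_add ((show Continuous fun θ => deriv Q θ * deriv Q θ from hcQ'.mul hcQ').intervalIntegrable _ _)
      ((show Continuous fun θ => Q θ * deriv (deriv Q) θ from hcQ.mul hcQ'').intervalIntegrable _ _)]
    exact hI3
  -- abbreviations
  set ITQ := ∫ θ in Set.Ioo thmin thmax, θ * Q θ with hITQ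
  set IQ2 := ∫ θ in Set.Ioo thmin thmax, Q θ ^ 2 with hIQ2
  set ITQ2 := ∫ θ in Set.Ioo thmin thmax, θ * Q θ ^ 2 with hITQ2
  set K := ∫ θ in Set.Ioo thmin thmax, deriv Q θ * deriv Q θ with hK
  -- First identity: lam^2 * ITQ = lam*c - r
  have key1 : (∫ θ in Set.Ioo thmin thmax, ((lam*c - r) * Q θ - lam^2 * (θ * Q θ))) = 0 := by
    rw [setIntegral_congr_fun measurableSet_Ioo
      (show EqOn (fun θ => (lam*c - r) * Q θ - lam^2 * (θ * Q θ))
        (fun θ => alpha * deriv (deriv Q) θ) (Set.Ioo thmin thmax) by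
        intro θ hθ
        have := hode' θ hθ
        simp only
        linear_combination -this)]
    rw [integral_const_mul, hset, hI2, mul_zero]
  have key1' : (lam*c - r) * 1 - lam^2 * ITQ = 0 := by
    rw [← hnorm]
    rw [integral_sub ((hint Q hcQ).const_mul _) ((hint _ (show Continuous fun θ : ℝ => θ * Q θ from continuous_id.mul hcQ)).const_mul _),
      integral_const_mul, integral_const_mul] at key1
    exact key1
  -- Second identity: lam^2 * ITQ2 = (lam*c - r) * IQ2 + alpha * K
  have key2 : (∫ θ in Set.Ioo thmin thmax, ((lam*c - r) * Q θ^2 - lam^2 * (θ * Q θ^2))) = - (alpha * K) := by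
    rw [setIntegral_congr_fun measurableSet_Ioo
      (show EqOn (fun θ => (lam*c - r) * Q θ^2 - lam^2 * (θ * Q θ^2))
        (fun θ => alpha * (Q θ * deriv (deriv Q) θ)) (Set.Ioo thmin thmax) by
        intro θ hθ
        have := hode' θ hθ
        simp only
        linear_combination -(Q θ) * this)]
    rw [integral_const_mul, hset, hK, hset]
    have : (∫ θ in thmin..thmax, Q θ * deriv (deriv Q) θ)
        = - ∫ θ in thmin..thmax, deriv Q θ * deriv Q θ := by linarith
    rw [this]; ring
  have key2' : (lam*c - r) * IQ2 - lam^2 * ITQ2 = - (alpha * K) := by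
    rw [integral_sub ((hint _ (show Continuous fun θ : ℝ => Q θ ^ 2 from hcQ.pow 2)).const_mul _)
      ((hint _ (show Continuous fun θ : ℝ => θ * Q θ ^ 2 from continuous_id.mul (hcQ.pow 2))).const_mul _),
      integral_const_mul, integral_const_mul] at key2
    exact key2
  -- positivity of IQ2
  have hPQ2 : 0 < IQ2 := by
    rw [hIQ2, hset]
    exact intervalIntegral.intervalIntegral_pos_of_pos_on ((hcQ.pow 2).intervalIntegrable _ _)
      (fun x hx => pow_pos (hpos x (Ioo_subset_Icc_self hx)) 2) hthth
  -- positivity of K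
  have hKpos : 0 < K := by
    by_cases hz : ∀ θ ∈ Set.Ioo thmin thmax, deriv Q θ = 0
    · -- then Q'' = 0 on Ioo, contradiction via ODE at two points
      exfalso
      have hQ'' : ∀ θ ∈ Set.Ioo thmin thmax, deriv (deriv Q) θ = 0 := by
        intro θ hθ
        have hev : deriv Q =ᶠ[nhds θ] (fun _ => 0) := by
          filter_upwards [Ioo_mem_nhds hθ.1 hθ.2] with x hx using hz x hx
        rw [hev.deriv_eq]
        simp
      have hcoef : ∀ θ ∈ Set.Ioo thmin thmax, lam * c - θ * lam^2 - r = 0 := by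
        intro θ hθ
        have h := hode' θ hθ
        rw [hQ'' θ hθ, mul_zero] at h
        have hq := hpos θ (Ioo_subset_Icc_self hθ)
        rcases mul_eq_zero.mp h.symm with h' | h'
        · exact h'
        · exact absurd h' (ne_of_gt hq)
      set t1 := thmin + (thmax - thmin)/3 with ht1
      set t2 := thmin + 2*(thmax - thmin)/3 with ht2
      have h1 := hcoef t1 ⟨by simp [ht1]; linarith, by simp [ht1]; linarith⟩
      have h2 := hcoef t2 ⟨by simp [ht2]; linarith, by simp [ht2]; linarith⟩
      have ht12 : t1 < t2 := by simp [ht1, ht2]; linarith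
      nlinarith [sq_nonneg lam, mul_pos hlam hlam]
    · push_neg at hz
      obtain ⟨θ1, hθ1, hθ1ne⟩ := hz
      have hnn : 0 ≤ᵐ[volume.restrict (Set.Ioo thmin thmax)]
          (fun θ => deriv Q θ * deriv Q θ) := by
        exact Filter.Eventually.of_forall (fun x => mul_self_nonneg _)
      rw [hK, setIntegral_pos_iff_support_of_nonneg_ae hnn (hint _ (hcQ'.mul hcQ'))]
      have hopen : IsOpen (Function.support (fun θ => deriv Q θ * deriv Q θ)
          ∩ Set.Ioo thmin thmax) :=
        ((hcQ'.mul hcQ').isOpen_support).inter isOpen_Ioo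
      have hne : (Function.support (fun θ => deriv Q θ * deriv Q θ)
          ∩ Set.Ioo thmin thmax).Nonempty := by
        exact ⟨θ1, by simp [Function.mem_support, mul_self_eq_zero, hθ1ne], hθ1⟩
      exact hopen.measure_pos volume hne
  -- conclude
  have hmain : lam^2 * (ITQ2 - ITQ * IQ2) = alpha * K := by
    linear_combination -key2' + IQ2 * key1'
  have hlt : ITQ * IQ2 < ITQ2 := by
    nlinarith [mul_pos halpha hKpos, mul_pos hlam hlam]
  rw [gt_iff_lt, lt_div_iff₀ hPQ2]
  exact hlt
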